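/- Let G be a λ_1-two-sided spectral expander and H a λ_2-two-sided spectral expander, both regular graphs, with λ_1 ≤ λ_2 ≤ 1. Then the zig-zag product G ⓩ H, with walk operator (I ⊗ A_H) G̃ (I ⊗ A_H) where G̃ is a permutation operator, satisfies σ_2(G ⓩ H) ≤ 2λ_2. -/

import Mathlib

/-- Euclidean norm of a finitely-indexed vector. -/
noncomputable def en {ι : Type*} [Fintype ι] (f : ι → ℝ) : ℝ :=
  Real.sqrt (∑ i, f i ^ 2)

/-- Inner product of finitely-indexed vectors. -/
def ip {ι : Type*} [Fintype ι] (f g : ι → ℝ) : ℝ := ∑ i, f i * g i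

section aux
variable {ι : Type*} [Fintype ι]

lemma en_nonneg (f : ι → ℝ) : 0 ≤ en f := Real.sqrt_nonneg _

lemma en_sq (f : ι → ℝ) : en f ^ 2 = ∑ i, f i ^ 2 :=
  Real.sq_sqrt (Finset.sum_nonneg fun i _ => sq_nonneg _)

lemma ip_comm (f g : ι → ℝ) : ip f g = ip g f := by
  simp [ip, mul_comm]

lemma ip_add_left (f g h : ι → ℝ) : ip (f + g) h = ip f h + ip g h := by
  simp [ip, add_mul, Finset.sum_add_distrib]

lemma expand_sq (f g : ι → ℝ) (ε : ℝ) :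
    en (f + ε • g) ^ 2 = en f ^ 2 + 2 * ε * ip f g + ε ^ 2 * en g ^ 2 := by
  rw [en_sq, en_sq, en_sq, ip, Finset.mul_sum, Finset.mul_sum,
    ← Finset.sum_add_distrib, ← Finset.sum_add_distrib]
  apply Finset.sum_congr rfl
  intros; simp only [Pi.add_apply, Pi.smul_apply, smul_eq_mul]; ring

lemma abs_ip_le (f g : ι → ℝ) : |ip f g| ≤ en f * en g := by
  have h := Finset.sum_mul_sq_le_sq_mul_sq Finset.univ f g
  have h2 : |ip f g| = Real.sqrt ((∑ i, f i * g i) ^ 2) := by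
    rw [Real.sqrt_sq_eq_abs]; rfl
  rw [h2, en, en, ← Real.sqrt_mul (Finset.sum_nonneg fun i _ => sq_nonneg _)]
  exact Real.sqrt_le_sqrt h

lemma en_le_en_of_sq (f g : ι → ℝ) (h : en f ^ 2 ≤ en g ^ 2) : en f ≤ en g := by
  have h2 := Real.sqrt_le_sqrt h
  rwa [Real.sqrt_sq (en_nonneg f), Real.sqrt_sq (en_nonneg g)] at h2

lemma en_add_le (f g : ι → ℝ) : en (f + g) ≤ en f + en g := by
  have h1 : f + g = f + (1:ℝ) • g := by simp
  have h2 : en (f + g) ^ 2 ≤ (en f + en g) ^ 2 := by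
    rw [h1, expand_sq]
    have := abs_ip_le f g
    have := en_nonneg f
    have := en_nonneg g
    nlinarith [abs_nonneg (ip f g), le_abs_self (ip f g)]
  have h3 := Real.sqrt_le_sqrt h2
  rwa [Real.sqrt_sq (en_nonneg _), Real.sqrt_sq (add_nonneg (en_nonneg f) (en_nonneg g))] at h3

lemma zero_of_forall_le (c K : ℝ) (h : ∀ ε : ℝ, 2 * ε * c ≤ ε ^ 2 * K) : c = 0 := by
  by_contra hc
  have hK : 0 ≤ K := by
    have := h 1; have := h (-1); nlinarith
  have h1 := h (c / (K + 1))
  have hK1 : (0:ℝ) < K + 1 := by linarith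
  have hc2 : 0 < c ^ 2 := by positivity
  rw [show 2 * (c / (K + 1)) * c = 2 * c * c / (K + 1) from by ring, div_pow,
    show c ^ 2 / (K + 1) ^ 2 * K = c ^ 2 * K / (K + 1) ^ 2 from by ring,
    div_le_div_iff₀ (by positivity) (by positivity)] at h1
  nlinarith [mul_pos hc2 hK1, mul_pos (mul_pos hc2 hK1) hK1]

end aux

lemma ip_add_right {ι : Type*} [Fintype ι] (f g h : ι → ℝ) :
    ip f (g + h) = ip f g + ip f h := by
  simp [ip, mul_add, Finset.sum_add_distrib]


/-- Zig-zag spectral bound in the regime `λ₁ ≤ λ₂ ≤ 1`: if `G` is a `λ₁`-two-sided expander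
(encoded by the quadratic-form bound for the permutation operator `Gt` on cloud-uniform
vectors) and `H` is a `λ₂`-two-sided expander (encoded by the contraction property of
`M = I ⊗ A_H`), then the zig-zag walk operator `(I ⊗ A_H) G̃ (I ⊗ A_H)` satisfies
`σ₂(G ⓩ H) ≤ 2λ₂`, expressed as a quadratic-form bound on vectors orthogonal to
the all-ones vector. -/
theorem stmt_14 {VG VH : Type*} [Fintype VG] [Fintype VH] (lam1 lam2 : ℝ)
    (h1 : 0 ≤ lam1) (h12 : lam1 ≤ lam2) (h2 : lam2 ≤ 1)
    (M Gt : (VG × VH → ℝ) →ₗ[ℝ] (VG × VH → ℝ))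
    (hM1 : ∀ w : VG × VH → ℝ, (∀ a : VG, ∑ h, w (a, h) = 0) →
      en (M w) ≤ lam2 * en w)
    (hM2 : ∀ x : VG → ℝ, M (fun p => x p.1) = fun p => x p.1)
    (hMn : ∀ f, en (M f) ≤ en f)
    (hGt : ∀ f, en (Gt f) = en f)
    (hG3 : ∀ x : VG → ℝ, (∑ a, x a) = 0 →
      |ip (fun p : VG × VH => x p.1) (Gt fun p => x p.1)| ≤
        lam1 * en (fun p : VG × VH => x p.1) ^ 2)
    (v : VG × VH → ℝ) (hv : ip v (fun _ => 1) = 0) :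
    |ip v (M (Gt (M v)))| ≤ 2 * lam2 * en v ^ 2 := by
  have h02 : 0 ≤ lam2 := le_trans h1 h12
  rcases isEmpty_or_nonempty VH with hVH | hVH
  · have hz : ip v (M (Gt (M v))) = 0 := by simp [ip]
    rw [hz, abs_zero]
    have := en_nonneg v
    nlinarith [sq_nonneg (en v)]
  -- main case
  have nHpos : 0 < (Fintype.card VH : ℝ) := by exact_mod_cast Fintype.card_pos
  have nHne : (Fintype.card VH : ℝ) ≠ 0 := ne_of_gt nHpos
  -- orthogonality of cloud-constant and cloud-zero vectors
  have orth : ∀ (y : VG → ℝ) (f : VG × VH → ℝ), (∀ a, ∑ h, f (a, h) = 0) →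
      ip (fun p => y p.1) f = 0 := by
    intro y f hf
    rw [ip, Fintype.sum_prod_type]
    have hterm : ∀ a : VG, ∑ h, y a * f (a, h) = 0 := by
      intro a; rw [← Finset.mul_sum, hf a, mul_zero]
    simpa using Finset.sum_congr rfl (fun a _ => hterm a) |>.trans (by simp)
  -- claim A: M maps cloud-zero vectors to vectors orthogonal to cloud-constant ones
  have claimA : ∀ (y : VG → ℝ) (f : VG × VH → ℝ), (∀ a, ∑ h, f (a, h) = 0) →
      ip (fun p => y p.1) (M f) = 0 := by
    intro y f hf
    apply zero_of_forall_le _ (en f ^ 2)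
    intro ε
    have hle := hMn ((fun p => y p.1) + ε • f)
    have hsq : en (M ((fun p => y p.1) + ε • f)) ^ 2 ≤
        en ((fun p => y p.1) + ε • f) ^ 2 := by
      nlinarith [en_nonneg (M ((fun p => y p.1) + ε • f)),
        en_nonneg ((fun p => y p.1) + ε • f)]
    rw [map_add, map_smul, hM2 y] at hsq
    rw [expand_sq, expand_sq, orth y f hf] at hsq
    nlinarith [mul_nonneg (sq_nonneg ε) (sq_nonneg (en (M f)))]
  -- the decomposition v = s + t
  set x : VG → ℝ := fun a => (∑ h, v (a, h)) / (Fintype.card VH : ℝ) with hx_def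
  set s : VG × VH → ℝ := fun p => x p.1 with hs_def
  set t : VG × VH → ℝ := v - s with ht_def
  have ht_cz : ∀ a : VG, ∑ h, t (a, h) = 0 := by
    intro a
    have : ∑ h, t (a, h) = (∑ h, v (a, h)) - (Fintype.card VH : ℝ) * x a := by
      simp [ht_def, hs_def, Finset.sum_sub_distrib, Finset.card_univ, mul_comm]
    rw [this, hx_def]
    field_simp
    ring
  have hv_eq : v = s + t := by funext p; simp [ht_def]
  have hMs : M s = s := hM2 x
  have hMv : M v = s + M t := by rw [hv_eq, map_add, hMs]
  have hxsum : ∑ a, x a = 0 := by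
    have hsv : ∑ p : VG × VH, v p = 0 := by simpa [ip] using hv
    rw [hx_def]
    rw [← Finset.sum_div]
    rw [show ∑ a : VG, ∑ h, v (a, h) = ∑ p : VG × VH, v p from
      (Fintype.sum_prod_type v).symm, hsv, zero_div]
  -- decomposition of z = Gt (M v)
  set zb : VG → ℝ := fun a => (∑ h, (Gt (M v)) (a, h)) / (Fintype.card VH : ℝ) with hzb_def
  set r : VG × VH → ℝ := fun p => zb p.1 with hr_def
  set w : VG × VH → ℝ := Gt (M v) - r with hw_def
  have hw_cz : ∀ a : VG, ∑ h, w (a, h) = 0 := by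
    intro a
    have : ∑ h, w (a, h) = (∑ h, (Gt (M v)) (a, h)) - (Fintype.card VH : ℝ) * zb a := by
      simp [hw_def, hr_def, Finset.sum_sub_distrib, Finset.card_univ, mul_comm]
    rw [this, hzb_def]
    field_simp
    ring
  have hz_split : Gt (M v) = r + w := by funext p; simp [hw_def]
  have hMr : M r = r := hM2 zb
  -- algebraic decomposition of the quadratic form
  have e1 : ip v (M (Gt (M v))) = ip s r + ip t (M w) := by
    have hMz : M (Gt (M v)) = r + M w := by
      conv_lhs => rw [hz_split]
      rw [map_add, hMr]
    have hsw : ip s (M w) = 0 := claimA x w hw_cz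
    have htr : ip t r = 0 := by rw [ip_comm]; exact orth zb t ht_cz
    rw [hMz]
    conv_lhs => rw [hv_eq]
    rw [ip_add_left, ip_add_right, ip_add_right, hsw, htr]
    ring
  have e2 : ip s r = ip s (Gt s) + ip s (Gt (M t)) := by
    have hsw2 : ip s w = 0 := orth x w hw_cz
    have hgz : Gt (M v) = Gt s + Gt (M t) := by rw [hMv, map_add]
    have : ip s (Gt (M v)) = ip s r + ip s w := by
      conv_lhs => rw [hz_split]
      rw [ip_add_right]
    rw [hgz, ip_add_right] at this
    rw [hsw2, add_zero] at this
    linarith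
  -- bounds
  have b1 : |ip s (Gt s)| ≤ lam1 * en s ^ 2 := hG3 x hxsum
  have hMt : en (M t) ≤ lam2 * en t := hM1 t ht_cz
  have b2 : |ip s (Gt (M t))| ≤ en s * (lam2 * en t) := by
    calc |ip s (Gt (M t))| ≤ en s * en (Gt (M t)) := abs_ip_le _ _
      _ = en s * en (M t) := by rw [hGt]
      _ ≤ en s * (lam2 * en t) := mul_le_mul_of_nonneg_left hMt (en_nonneg s)
  have hwz : en w ≤ en (Gt (M v)) := by
    apply en_le_en_of_sq
    conv_rhs => rw [hz_split]
    have hrw1 : r + w = r + (1:ℝ) • w := by simp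
    rw [hrw1, expand_sq, orth zb w hw_cz]
    nlinarith [sq_nonneg (en r)]
  have hzn : en (Gt (M v)) ≤ en s + lam2 * en t := by
    rw [hGt, hMv]
    calc en (s + M t) ≤ en s + en (M t) := en_add_le s (M t)
      _ ≤ en s + lam2 * en t := by linarith
  have hMw : en (M w) ≤ lam2 * (en s + lam2 * en t) := by
    calc en (M w) ≤ lam2 * en w := hM1 w hw_cz
      _ ≤ lam2 * (en s + lam2 * en t) :=
        mul_le_mul_of_nonneg_left (le_trans hwz hzn) h02
  have b3 : |ip t (M w)| ≤ en t * (lam2 * (en s + lam2 * en t)) := by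
    calc |ip t (M w)| ≤ en t * en (M w) := abs_ip_le _ _
      _ ≤ en t * (lam2 * (en s + lam2 * en t)) :=
        mul_le_mul_of_nonneg_left hMw (en_nonneg t)
  have env : en v ^ 2 = en s ^ 2 + en t ^ 2 := by
    conv_lhs => rw [hv_eq]
    have hst : s + t = s + (1:ℝ) • t := by simp
    rw [hst, expand_sq, orth x t ht_cz]
    ring
  have habs : |ip v (M (Gt (M v)))| ≤
      |ip s (Gt s)| + |ip s (Gt (M t))| + |ip t (M w)| := by
    rw [e1, e2]
    calc |ip s (Gt s) + ip s (Gt (M t)) + ip t (M w)|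
        ≤ |ip s (Gt s) + ip s (Gt (M t))| + |ip t (M w)| := abs_add_le _ _
      _ ≤ |ip s (Gt s)| + |ip s (Gt (M t))| + |ip t (M w)| := by
          have := abs_add_le (ip s (Gt s)) (ip s (Gt (M t))); linarith
  have ha := en_nonneg s
  have hb := en_nonneg t
  nlinarith [mul_nonneg h02 (sq_nonneg (en s - en t)),
    mul_nonneg (sub_nonneg.2 h12) (sq_nonneg (en s)),
    mul_nonneg (mul_nonneg h02 (sub_nonneg.2 h2)) (sq_nonneg (en t))]
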